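/- Let G be a connected simple graph in which every vertex has degree at most 3, let R be a vertex of G, and let S be a finite set of vertices of G with |S| ≥ 2. Then Σ_{v ∈ S} dist_G(R, v) ≥ (|S|/2)·(log₂|S| − 4). -/

import Mathlib

set_option linter.unusedSectionVars false

open Finset

section Aux

variable {V : Type} [Fintype V] [DecidableEq V] (G : SimpleGraph V) [DecidableRel G.Adj]

/-- If `dist R v = d + 1`, there is a neighbor `u` of `v` with `dist R u = d`. -/
lemma stmt13_pred (hconn : G.Connected) (R v : V) (d : ℕ) (h : G.dist R v = d + 1) :
    ∃ u, G.Adj u v ∧ G.dist R u = d := by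
  obtain ⟨p, hp⟩ := hconn.exists_walk_length_eq_dist R v
  have hvR : v ≠ R := by
    intro hvR
    subst hvR
    rw [hconn.dist_eq_zero_iff.mpr rfl] at h
    omega
  obtain ⟨u, hadj, q, hq⟩ := SimpleGraph.Walk.exists_eq_cons_of_ne hvR p.reverse
  refine ⟨u, hadj.symm, ?_⟩
  have hlen : q.length = d := by
    have := congrArg SimpleGraph.Walk.length hq
    simp only [SimpleGraph.Walk.length_reverse, SimpleGraph.Walk.length_cons, hp, h] at this
    omega
  have h1 : G.dist R u ≤ d := by
    have := G.dist_le q.reverse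
    simpa [hlen] using this
  have h2 : G.dist u v ≤ 1 := by
    simpa using G.dist_le hadj.symm.toWalk
  have h3 : G.dist R v ≤ G.dist R u + G.dist u v := hconn.dist_triangle
  omega

/-- The sphere of radius `d` around `R`. -/
noncomputable def stmt13_sph (R : V) (d : ℕ) : Finset V := univ.filter (fun v => G.dist R v = d)

/-- The ball of radius `d` around `R`. -/
noncomputable def stmt13_bal (R : V) (d : ℕ) : Finset V := univ.filter (fun v => G.dist R v ≤ d)

lemma stmt13_sph_step (hconn : G.Connected) (hdeg : ∀ v, G.degree v ≤ 3) (R : V) (d : ℕ) :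
    (stmt13_sph G R (d + 2)).card ≤ 2 * (stmt13_sph G R (d + 1)).card := by
  have hsub : stmt13_sph G R (d + 2) ⊆
      (stmt13_sph G R (d + 1)).biUnion
        (fun u => (G.neighborFinset u) ∩ stmt13_sph G R (d + 2)) := by
    intro v hv
    simp only [stmt13_sph, mem_filter, mem_univ, true_and] at hv
    obtain ⟨u, hadj, hu⟩ := stmt13_pred G hconn R v (d + 1) hv
    rw [mem_biUnion]
    refine ⟨u, ?_, ?_⟩
    · simp [stmt13_sph, hu]
    · simp [stmt13_sph, hv, hadj]
  calc (stmt13_sph G R (d + 2)).card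
      ≤ ((stmt13_sph G R (d + 1)).biUnion
          (fun u => (G.neighborFinset u) ∩ stmt13_sph G R (d + 2))).card :=
        card_le_card hsub
    _ ≤ ∑ u ∈ stmt13_sph G R (d + 1),
          ((G.neighborFinset u) ∩ stmt13_sph G R (d + 2)).card := card_biUnion_le
    _ ≤ ∑ _u ∈ stmt13_sph G R (d + 1), 2 := by
        apply sum_le_sum
        intro u hu
        simp only [stmt13_sph, mem_filter, mem_univ, true_and] at hu
        obtain ⟨w, hadjw, hw⟩ := stmt13_pred G hconn R u d hu
        have hwmem : w ∈ G.neighborFinset u := by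
          simp [SimpleGraph.mem_neighborFinset, hadjw.symm]
        have hsub2 : (G.neighborFinset u) ∩ stmt13_sph G R (d + 2) ⊆
            (G.neighborFinset u).erase w := by
          intro x hx
          simp only [mem_inter, stmt13_sph, mem_filter, mem_univ, true_and] at hx
          refine mem_erase.mpr ⟨?_, hx.1⟩
          intro hxw
          subst hxw
          omega
        calc ((G.neighborFinset u) ∩ stmt13_sph G R (d + 2)).card
            ≤ ((G.neighborFinset u).erase w).card := card_le_card hsub2
          _ = (G.neighborFinset u).card - 1 := card_erase_of_mem hwmem
          _ ≤ 2 := by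
              have := hdeg u
              rw [← SimpleGraph.card_neighborFinset_eq_degree] at this
              omega
    _ = 2 * (stmt13_sph G R (d + 1)).card := by rw [sum_const, smul_eq_mul, mul_comm]

lemma stmt13_bal_bound (hconn : G.Connected) (hdeg : ∀ v, G.degree v ≤ 3) (R : V) (d : ℕ) :
    (stmt13_sph G R (d + 1)).card ≤ 3 * 2 ^ d ∧ (stmt13_bal G R d).card ≤ 3 * 2 ^ d := by
  induction d with
  | zero =>
    constructor
    · have hsub : stmt13_sph G R 1 ⊆ G.neighborFinset R := by
        intro v hv
        simp only [stmt13_sph, mem_filter, mem_univ, true_and] at hv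
        rw [SimpleGraph.dist_eq_one_iff_adj] at hv
        simpa [SimpleGraph.mem_neighborFinset] using hv
      calc (stmt13_sph G R 1).card ≤ (G.neighborFinset R).card := card_le_card hsub
        _ ≤ 3 := by rw [SimpleGraph.card_neighborFinset_eq_degree]; exact hdeg R
        _ ≤ 3 * 2 ^ 0 := by norm_num
    · have : stmt13_bal G R 0 = {R} := by
        ext v
        simp only [stmt13_bal, mem_filter, mem_univ, true_and, Nat.le_zero, mem_singleton,
          hconn.dist_eq_zero_iff]
        exact ⟨fun h => h.symm, fun h => h.symm⟩
      rw [this]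
      simp
  | succ d ih =>
    constructor
    · calc (stmt13_sph G R (d + 2)).card ≤ 2 * (stmt13_sph G R (d + 1)).card :=
          stmt13_sph_step G hconn hdeg R d
        _ ≤ 2 * (3 * 2 ^ d) := by omega
        _ = 3 * 2 ^ (d + 1) := by ring
    · have hsub : stmt13_bal G R (d + 1) ⊆ stmt13_bal G R d ∪ stmt13_sph G R (d + 1) := by
        intro v hv
        simp only [stmt13_bal, stmt13_sph, mem_filter, mem_univ, true_and, mem_union] at hv ⊢
        omega
      calc (stmt13_bal G R (d + 1)).card
          ≤ (stmt13_bal G R d ∪ stmt13_sph G R (d + 1)).card := card_le_card hsub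
        _ ≤ (stmt13_bal G R d).card + (stmt13_sph G R (d + 1)).card := card_union_le _ _
        _ ≤ 3 * 2 ^ d + 3 * 2 ^ d := by omega
        _ = 3 * 2 ^ (d + 1) := by ring

/-- Counting by level sets: the sum of truncated level-set counts bounds the distance sum. -/
lemma stmt13_levels (R : V) (S : Finset V) (D : ℕ) :
    ∑ j ∈ Finset.range D, (S.filter (fun v => j < G.dist R v)).card
      ≤ ∑ v ∈ S, G.dist R v := by
  have h1 : ∀ j, (S.filter (fun v => j < G.dist R v)).card
      = ∑ v ∈ S, (if j < G.dist R v then 1 else 0) := by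
    intro j
    rw [Finset.card_filter]
  calc ∑ j ∈ Finset.range D, (S.filter (fun v => j < G.dist R v)).card
      = ∑ j ∈ Finset.range D, ∑ v ∈ S, (if j < G.dist R v then 1 else 0) := by
        exact Finset.sum_congr rfl (fun j _ => h1 j)
    _ = ∑ v ∈ S, ∑ j ∈ Finset.range D, (if j < G.dist R v then 1 else 0) := Finset.sum_comm
    _ ≤ ∑ v ∈ S, G.dist R v := by
        apply sum_le_sum
        intro v _
        calc ∑ j ∈ Finset.range D, (if j < G.dist R v then 1 else 0)
            = ((Finset.range D).filter (fun j => j < G.dist R v)).card :=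
              (Finset.card_filter _ _).symm
          _ ≤ (Finset.range (G.dist R v)).card := by
              apply card_le_card
              intro j hj
              simp only [mem_filter, mem_range] at hj ⊢
              exact hj.2
          _ = G.dist R v := card_range _

end Aux

/-- In a connected simple graph of maximum degree at most `3`, for every
vertex `R` and every finite set `S` of vertices with `|S| ≥ 2`, the sum of distances from
`R` to the vertices of `S` is at least `(|S|/2)·(log₂|S| − 4)`. -/
theorem stmt13 {V : Type} [Fintype V] [DecidableEq V] (G : SimpleGraph V)
    [DecidableRel G.Adj] (hconn : G.Connected) (hdeg : ∀ v, G.degree v ≤ 3)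
    (R : V) (S : Finset V) (hS : 2 ≤ S.card) :
    ((S.card : ℝ) / 2) * (Real.logb 2 (S.card : ℝ) - 4) ≤ ∑ v ∈ S, (G.dist R v : ℝ) := by
  set C := S.card with hC
  have hC2 : (2 : ℝ) ≤ (C : ℝ) := by exact_mod_cast hS
  have hsum_nonneg : (0 : ℝ) ≤ ∑ v ∈ S, (G.dist R v : ℝ) := by positivity
  by_cases hsmall : C ≤ 16
  · -- small case: RHS is nonpositive
    have h16 : Real.logb 2 (16 : ℝ) = 4 := by
      rw [show (16 : ℝ) = 2 ^ (4 : ℕ) by norm_num, Real.logb_pow,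
        Real.logb_self_eq_one (by norm_num : (1:ℝ) < 2)]
      norm_num
    have h4 : Real.logb 2 (C : ℝ) ≤ 4 := by
      rw [← h16]
      exact Real.logb_le_logb_of_le (by norm_num) (by linarith) (by exact_mod_cast hsmall)
    nlinarith
  · push_neg at hsmall
    have hC17 : 17 ≤ C := hsmall
    set L := Nat.log 2 C with hLdef
    have hL4 : 4 ≤ L := by
      rw [hLdef, Nat.le_log_iff_pow_le (by norm_num) (by omega)]
      norm_num
      omega
    set D := L - 1 with hDdef
    have hDL : D + 1 = L := by omega
    -- key counting fact in ℕ
    have hkey : ∀ j : ℕ, C ≤ (S.filter (fun v => j < G.dist R v)).card + 3 * 2 ^ j := by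
      intro j
      have hsub : S ⊆ S.filter (fun v => j < G.dist R v) ∪ stmt13_bal G R j := by
        intro v hv
        by_cases h : j < G.dist R v
        · exact Finset.mem_union_left _ (Finset.mem_filter.mpr ⟨hv, h⟩)
        · refine Finset.mem_union_right _ ?_
          simp only [stmt13_bal, mem_filter, mem_univ, true_and]
          omega
      calc C = S.card := hC
        _ ≤ (S.filter (fun v => j < G.dist R v) ∪ stmt13_bal G R j).card :=
            Finset.card_le_card hsub
        _ ≤ (S.filter (fun v => j < G.dist R v)).card + (stmt13_bal G R j).card :=
            Finset.card_union_le _ _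
        _ ≤ (S.filter (fun v => j < G.dist R v)).card + 3 * 2 ^ j := by
            have := (stmt13_bal_bound G hconn hdeg R j).2
            omega
    -- geometric sum bound in ℕ
    have hgeom : ∀ n : ℕ, ∑ j ∈ Finset.range n, 2 ^ j + 1 = 2 ^ n := by
      intro n
      induction n with
      | zero => simp
      | succ n ih => rw [Finset.sum_range_succ]; omega
    -- main ℕ inequality: D * C ≤ sum of distances + 3 * 2^D
    have hmainN : D * C ≤ (∑ v ∈ S, G.dist R v) + 3 * 2 ^ D := by
      have h1 : ∑ j ∈ Finset.range D, C
          ≤ ∑ j ∈ Finset.range D, ((S.filter (fun v => j < G.dist R v)).card + 3 * 2 ^ j) :=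
        Finset.sum_le_sum (fun j _ => hkey j)
      rw [Finset.sum_const, Finset.sum_add_distrib, ← Finset.mul_sum, smul_eq_mul, Finset.card_range] at h1
      have h2 := stmt13_levels G R S D
      have h3 := hgeom D
      omega
    -- move to ℝ
    have hmainR : (D : ℝ) * (C : ℝ) ≤ (∑ v ∈ S, (G.dist R v : ℝ)) + 3 * 2 ^ D := by
      exact_mod_cast hmainN
    have h2D : (2 : ℝ) * 2 ^ D ≤ (C : ℝ) := by
      have hpow : 2 ^ L ≤ C := Nat.pow_log_le_self 2 (by omega)
      have : (2 : ℕ) * 2 ^ D = 2 ^ L := by rw [← hDL]; ring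
      exact_mod_cast (this ▸ hpow)
    have hlogL : Real.logb 2 (C : ℝ) < (L : ℝ) + 1 := by
      have hlt : C < 2 ^ (L + 1) := Nat.lt_pow_succ_log_self (by norm_num) C
      have hltR : (C : ℝ) < 2 ^ (L + 1) := by exact_mod_cast hlt
      have := Real.logb_lt_logb (b := 2) (by norm_num) (by linarith) hltR
      rwa [Real.logb_pow, Real.logb_self_eq_one (by norm_num : (1:ℝ) < 2), mul_one,
        Nat.cast_add, Nat.cast_one] at this
    have hDge : Real.logb 2 (C : ℝ) - 2 ≤ (D : ℝ) := by
      have : (D : ℝ) = (L : ℝ) - 1 := by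
        rw [hDdef]
        push_cast [Nat.cast_sub (by omega : 1 ≤ L)]
        ring
      linarith
    have hl3 : (3 : ℝ) ≤ Real.logb 2 (C : ℝ) := by
      have h8 : Real.logb 2 (8 : ℝ) = 3 := by
        rw [show (8 : ℝ) = 2 ^ (3 : ℕ) by norm_num, Real.logb_pow,
          Real.logb_self_eq_one (by norm_num : (1:ℝ) < 2)]
        norm_num
      rw [← h8]
      have : (8 : ℝ) ≤ (C : ℝ) := by
        have : (17 : ℝ) ≤ (C : ℝ) := by exact_mod_cast hC17
        linarith
      exact Real.logb_le_logb_of_le (by norm_num) (by norm_num) this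
    set l := Real.logb 2 (C : ℝ)
    set c := (C : ℝ)
    set s := ∑ v ∈ S, (G.dist R v : ℝ)
    have hcpos : (0 : ℝ) < c := by linarith
    have hDc : (l - 2) * c ≤ (D : ℝ) * c :=
      mul_le_mul_of_nonneg_right hDge (le_of_lt hcpos)
    have h32D : (3 : ℝ) * 2 ^ D ≤ 3 / 2 * c := by linarith
    have hlc : 3 * c ≤ l * c := mul_le_mul_of_nonneg_right hl3 (le_of_lt hcpos)
    nlinarith [hmainR, hDc, h32D, hlc]
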